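/- Let λ ∈ ℝ^N with λ_n ≥ 0 for all n, let c ∈ ℝ^N with c_n ≥ 0 for all n, let I₀ = {n : λ_n = 0}, and define f(k) = ∑_{n∈I₀} c_n² + ∑_{n∉I₀} (c_n k / (2λ_n + k))² for k > 0 (so f agrees with ∑_{n=1}^N (c_n k/(2λ_n + k))² on k > 0). Then f(k) → ∑_{n∈I₀} c_n² as k → 0⁺ and f(k) → ∑_{n=1}^N c_n² as k → +∞, and for every ε > 0 with ∑_{n∈I₀} c_n² < ε² < ∑_{n=1}^N c_n², there exists a unique k > 0 such that f(k) = ε². -/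

import Mathlib

section aux

private lemma term_le {lam c a b : ℝ} (hlam : 0 < lam) (hc : 0 ≤ c) (ha : 0 < a)
    (hab : a ≤ b) : (c * a / (2 * lam + a)) ^ 2 ≤ (c * b / (2 * lam + b)) ^ 2 := by
  have hda : 0 < 2 * lam + a := by linarith
  have hdb : 0 < 2 * lam + b := by linarith
  have h1 : c * a / (2 * lam + a) ≤ c * b / (2 * lam + b) := by
    rw [div_le_div_iff₀ hda hdb]
    nlinarith [mul_nonneg (mul_nonneg hc hlam.le) (sub_nonneg.2 hab)]
  have h0 : 0 ≤ c * a / (2 * lam + a) := by positivity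
  exact pow_le_pow_left₀ h0 h1 2

private lemma term_lt {lam c a b : ℝ} (hlam : 0 < lam) (hc : 0 < c) (ha : 0 < a)
    (hab : a < b) : (c * a / (2 * lam + a)) ^ 2 < (c * b / (2 * lam + b)) ^ 2 := by
  have hda : 0 < 2 * lam + a := by linarith
  have hdb : 0 < 2 * lam + b := by linarith
  have h1 : c * a / (2 * lam + a) < c * b / (2 * lam + b) := by
    rw [div_lt_div_iff₀ hda hdb]
    nlinarith [mul_pos (mul_pos hc hlam) (sub_pos.2 hab)]
  have h0 : 0 ≤ c * a / (2 * lam + a) := by positivity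
  exact pow_lt_pow_left₀ h1 h0 two_ne_zero

end aux

open Classical in
/-- with `λ ≥ 0`, `c ≥ 0`, `I₀ = {n : λ_n = 0}` and
`f(k) = ∑_{n∈I₀} c_n² + ∑_{n∉I₀} (c_n k/(2λ_n + k))²` for `k > 0`,
one has `f(k) → ∑_{I₀} c_n²` as `k → 0⁺`, `f(k) → ∑ c_n²` as `k → ∞`, and for
every `ε > 0` with `∑_{I₀} c_n² < ε² < ∑ c_n²` there is a unique `k > 0` with
`f(k) = ε²`. -/
theorem rab_secular_rank_deficient (N : ℕ)
    (lam c : Fin N → ℝ) (hlam : ∀ n, 0 ≤ lam n) (hc : ∀ n, 0 ≤ c n) :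
    Filter.Tendsto
      (fun k : ℝ => (∑ n ∈ Finset.univ.filter (fun n => lam n = 0), (c n) ^ 2) +
        ∑ n ∈ Finset.univ.filter (fun n => lam n ≠ 0), (c n * k / (2 * lam n + k)) ^ 2)
      (nhdsWithin 0 (Set.Ioi 0))
      (nhds (∑ n ∈ Finset.univ.filter (fun n => lam n = 0), (c n) ^ 2)) ∧
    Filter.Tendsto
      (fun k : ℝ => (∑ n ∈ Finset.univ.filter (fun n => lam n = 0), (c n) ^ 2) +
        ∑ n ∈ Finset.univ.filter (fun n => lam n ≠ 0), (c n * k / (2 * lam n + k)) ^ 2)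
      Filter.atTop (nhds (∑ n, (c n) ^ 2)) ∧
    (∀ ε : ℝ, 0 < ε →
      (∑ n ∈ Finset.univ.filter (fun n => lam n = 0), (c n) ^ 2) < ε ^ 2 →
      ε ^ 2 < ∑ n, (c n) ^ 2 →
      ∃! k : ℝ, 0 < k ∧
        (∑ n ∈ Finset.univ.filter (fun n => lam n = 0), (c n) ^ 2) +
          (∑ n ∈ Finset.univ.filter (fun n => lam n ≠ 0),
            (c n * k / (2 * lam n + k)) ^ 2) = ε ^ 2) := by
  set s : Finset (Fin N) := Finset.univ.filter (fun n => lam n ≠ 0) with hs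
  set S0 : ℝ := ∑ n ∈ Finset.univ.filter (fun n => lam n = 0), (c n) ^ 2 with hS0
  set f : ℝ → ℝ := fun k =>
    S0 + ∑ n ∈ s, (c n * k / (2 * lam n + k)) ^ 2 with hf
  have hlampos : ∀ n ∈ s, 0 < lam n := by
    intro n hn
    rw [hs, Finset.mem_filter] at hn
    exact lt_of_le_of_ne (hlam n) (Ne.symm hn.2)
  -- continuity of f at every k ≥ 0
  have hfc : ∀ k : ℝ, 0 ≤ k → ContinuousAt f k := by
    intro k hk
    apply ContinuousAt.add continuousAt_const
    exact tendsto_finset_sum _ fun n hn => by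
      have hd : 2 * lam n + k ≠ 0 := by
        have := hlampos n hn; positivity
      exact (((continuousAt_const.mul continuousAt_id).div
        (continuousAt_const.add continuousAt_id) hd).pow 2)
  -- limit at 0+
  have hf0 : f 0 = S0 := by
    simp [hf]
  have h1 : Filter.Tendsto f (nhdsWithin 0 (Set.Ioi 0)) (nhds S0) := by
    have := (hfc 0 le_rfl).tendsto
    rw [hf0] at this
    exact this.mono_left nhdsWithin_le_nhds
  -- limit at atTop
  have hsplit : (∑ n, (c n) ^ 2) = S0 + ∑ n ∈ s, (c n) ^ 2 := by
    rw [hS0, hs]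
    exact (Finset.sum_filter_add_sum_filter_not Finset.univ _ _).symm
  have h2 : Filter.Tendsto f Filter.atTop (nhds (∑ n, (c n) ^ 2)) := by
    rw [hsplit]
    apply Filter.Tendsto.const_add
    apply tendsto_finset_sum
    intro n hn
    have hl := hlampos n hn
    have hterm : Filter.Tendsto (fun k : ℝ => c n * k / (2 * lam n + k))
        Filter.atTop (nhds (c n)) := by
      have hq : Filter.Tendsto (fun k : ℝ => 2 * lam n * c n / (2 * lam n + k))
          Filter.atTop (nhds 0) :=
        Filter.Tendsto.div_atTop tendsto_const_nhds
          (Filter.tendsto_atTop_add_const_left _ _ Filter.tendsto_id)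
      have : Filter.Tendsto (fun k : ℝ => c n - 2 * lam n * c n / (2 * lam n + k))
          Filter.atTop (nhds (c n - 0)) := tendsto_const_nhds.sub hq
      rw [sub_zero] at this
      apply this.congr'
      filter_upwards [Filter.eventually_gt_atTop 0] with k hk
      have hd : 2 * lam n + k ≠ 0 := by positivity
      field_simp
      ring
    simpa using hterm.pow 2
  refine ⟨h1, h2, ?_⟩
  intro ε hε hlow hhigh
  -- there is a strictly increasing term
  have hpos : 0 < ∑ n ∈ s, (c n) ^ 2 := by
    rw [hsplit] at hhigh; linarith
  have hwit : ∃ m ∈ s, 0 < c m := by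
    by_contra h
    push_neg at h
    have : ∑ n ∈ s, (c n) ^ 2 ≤ 0 := by
      apply Finset.sum_nonpos
      intro n hn
      have hz : c n = 0 := le_antisymm (h n hn) (hc n)
      rw [hz]; norm_num
    linarith
  obtain ⟨m, hm, hcm⟩ := hwit
  -- strict monotonicity of f on (0, ∞)
  have hmono : ∀ a b : ℝ, 0 < a → a < b → f a < f b := by
    intro a b ha hab
    rw [hf]
    apply add_lt_add_of_le_of_lt le_rfl
    apply Finset.sum_lt_sum
    · intro n hn
      exact term_le (hlampos n hn) (hc n) ha hab.le
    · exact ⟨m, hm, term_lt (hlampos m hm) hcm ha hab⟩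
  -- pick endpoints for IVT
  have hk1 : ∃ k₁ : ℝ, 0 < k₁ ∧ f k₁ < ε ^ 2 := by
    have hev := h1.eventually_lt_const hlow
    obtain ⟨k₁, hk₁, hfk₁⟩ := (eventually_mem_nhdsWithin.and hev).exists
    exact ⟨k₁, hk₁, hfk₁⟩
  obtain ⟨k₁, hk₁pos, hfk₁⟩ := hk1
  have hk2 : ∃ k₂ : ℝ, k₁ < k₂ ∧ ε ^ 2 < f k₂ := by
    have hev := h2.eventually_const_lt hhigh
    obtain ⟨k₂, hk₂, hfk₂⟩ := ((Filter.eventually_gt_atTop k₁).and hev).exists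
    exact ⟨k₂, hk₂, hfk₂⟩
  obtain ⟨k₂, hk₁₂, hfk₂⟩ := hk2
  have hcont : ContinuousOn f (Set.Icc k₁ k₂) := by
    intro k hk
    exact (hfc k (le_trans hk₁pos.le hk.1)).continuousWithinAt
  have hsub := intermediate_value_Icc hk₁₂.le hcont
  have hmem : ε ^ 2 ∈ Set.Icc (f k₁) (f k₂) := ⟨hfk₁.le, hfk₂.le⟩
  obtain ⟨k, hkmem, hfk⟩ := hsub hmem
  have hkpos : 0 < k := lt_of_lt_of_le hk₁pos hkmem.1
  refine ⟨k, ⟨hkpos, hfk⟩, ?_⟩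
  rintro k' ⟨hk'pos, hfk'⟩
  have hfk'' : f k' = ε ^ 2 := hfk'
  by_contra hne
  rcases lt_or_gt_of_ne hne with h | h
  · have := hmono k' k hk'pos h
    rw [hfk'', hfk] at this; exact lt_irrefl _ this
  · have := hmono k k' hkpos h
    rw [hfk'', hfk] at this; exact lt_irrefl _ this
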